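/- Let 0 < r < 1, let 0 < φ < π/2, and let w be a complex number with |w| ≤ r and w not in the open sector {ρe^{iθ} : ρ > 0, -φ < θ < φ}. If r ≤ cos φ, then |w - 1| > |r e^{iφ} - 1| whenever |w| < r, and |w - 1| ≥ |r e^{iφ} - 1| in general. -/

import Mathlib

open Real
theorem stmt12 (r φ : ℝ) (hr1 : 0 < r) (hr2 : r < 1) (hφ1 : 0 < φ) (hφ2 : φ < π / 2)
    (w : ℂ) (hw : ‖w‖ ≤ r)
    (hsec : ¬ ∃ ρ θ : ℝ, 0 < ρ ∧ -φ < θ ∧ θ < φ ∧ w = (ρ : ℂ) * Complex.exp (θ * Complex.I))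
    (hrc : r ≤ Real.cos φ) :
    (‖w‖ < r → ‖(r : ℂ) * Complex.exp (φ * Complex.I) - 1‖ < ‖w - 1‖) ∧
      ‖(r : ℂ) * Complex.exp (φ * Complex.I) - 1‖ ≤ ‖w - 1‖ := by
  have hcos : 0 < Real.cos φ := Real.cos_pos_of_mem_Ioo ⟨by linarith [Real.pi_pos], hφ2⟩
  have hre : w.re ≤ ‖w‖ * Real.cos φ := by
    by_contra h
    push_neg at h
    have hw0 : w ≠ 0 := by
      intro h0
      rw [h0] at h
      simp at h
    have hcosarg : Real.cos (Complex.arg w) = w.re / ‖w‖ := Complex.cos_arg hw0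
    have habs : 0 < ‖w‖ := norm_pos_iff.mpr hw0
    have hre' : w.re = ‖w‖ * Real.cos (Complex.arg w) := by
      rw [hcosarg]; field_simp [habs.ne']
    have hcc : Real.cos φ < Real.cos (Complex.arg w) := by
      rw [hre'] at h
      exact lt_of_mul_lt_mul_left h habs.le
    have hargabs : |Complex.arg w| < φ := by
      by_contra hx
      push_neg at hx
      have hpi : |Complex.arg w| ≤ π := abs_le.mpr ⟨(Complex.neg_pi_lt_arg w).le, Complex.arg_le_pi w⟩
      have h1 : Real.cos |Complex.arg w| ≤ Real.cos φ :=
        Real.cos_le_cos_of_nonneg_of_le_pi hφ1.le hpi hx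
      rw [Real.cos_abs] at h1
      linarith
    rw [abs_lt] at hargabs
    exact hsec ⟨‖w‖, Complex.arg w, habs, hargabs.1, hargabs.2,
      (Complex.norm_mul_exp_arg_mul_I w).symm⟩
  set A := ‖(r : ℂ) * Complex.exp (φ * Complex.I) - 1‖ with hA
  set B := ‖w - 1‖ with hB
  have hA2 : A ^ 2 = r ^ 2 - 2 * r * Real.cos φ + 1 := by
    rw [hA, Complex.sq_norm, Complex.normSq_apply]
    simp [Complex.exp_mul_I, Complex.cos_ofReal_re, Complex.sin_ofReal_re]
    nlinarith [Real.sin_sq_add_cos_sq φ]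
  have hB2 : B ^ 2 = (‖w‖) ^ 2 - 2 * w.re + 1 := by
    rw [hB, Complex.sq_norm, Complex.normSq_apply, Complex.sq_norm w, Complex.normSq_apply]
    simp
    ring
  have hAnn : 0 ≤ A := norm_nonneg _
  have hBnn : 0 ≤ B := norm_nonneg _
  have hwnn : 0 ≤ ‖w‖ := norm_nonneg _
  constructor
  · intro hlt
    nlinarith [hA2, hB2, hre, hrc, hlt]
  · nlinarith [hA2, hB2, hre, hrc, hw]
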